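/- The exponential generating function of H(n) := Σ_{k=1}^{n} (k-1)!·S(n,k) (with H(0)=0) satisfies Σ_{n≥0} H(n)·xⁿ/n! = -log(2 - eˣ) for real x with |x| < log 2. -/

import Mathlib

open Finset

/-- Stirling numbers of the second kind. -/
def S : ℕ → ℕ → ℕ
  | 0, 0 => 1
  | 0, _ + 1 => 0
  | _ + 1, 0 => 0
  | n + 1, k + 1 => (k + 1) * S n (k + 1) + S n k

/-- Ordered Bell (Fubini) numbers. -/
def B (n : ℕ) : ℕ := ∑ k ∈ range (n + 1), k.factorial * S n k

/-- H n = ∑_{k=1}^n (k-1)!·S(n,k); note H 0 = 0 since the sum is empty. -/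
def H (n : ℕ) : ℕ := ∑ k ∈ Icc 1 n, (k - 1).factorial * S n k

lemma S_eq_zero : ∀ {n k : ℕ}, n < k → S n k = 0
  | 0, 0, h => absurd h (lt_irrefl _)
  | 0, _ + 1, _ => rfl
  | n + 1, k + 1, h => by
    have h1 : n < k + 1 := Nat.lt_of_succ_lt_succ (Nat.lt_succ_of_lt h)
    have h2 : n < k := Nat.lt_of_succ_lt_succ h
    simp [S, S_eq_zero h1, S_eq_zero h2]

noncomputable def T (n k : ℕ) : ℝ :=
  ∑ j ∈ range (k + 1), (-1 : ℝ) ^ (k - j) * (k.choose j) * (j : ℝ) ^ n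

lemma T_zero (k : ℕ) : T 0 k = if k = 0 then 1 else 0 := by
  have h := add_pow (1 : ℝ) (-1) k
  simp only [add_neg_cancel, one_pow, one_mul] at h
  rw [zero_pow_eq] at h
  rw [T, h]
  apply Finset.sum_congr rfl
  intro j hj
  ring

lemma T_rec_aux (n k : ℕ) :
    T n (k + 1) + T n k
      = ∑ i ∈ range (k + 1), (-1 : ℝ) ^ (k - i) * (k.choose i) * ((i : ℝ) + 1) ^ n := by
  have hT : T n k
      = (∑ i ∈ range k, (-1 : ℝ) ^ (k - (i + 1)) * (k.choose (i + 1)) * ((i : ℝ) + 1) ^ n)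
        + (-1 : ℝ) ^ k * (0 : ℝ) ^ n := by
    rw [T, Finset.sum_range_succ']
    push_cast
    simp
  have hA : (∑ i ∈ range (k + 1), (-1 : ℝ) ^ (k - i) * (k.choose (i + 1)) * ((i : ℝ) + 1) ^ n)
      = -T n k + (-1 : ℝ) ^ k * (0 : ℝ) ^ n := by
    rw [Finset.sum_range_succ, Nat.choose_succ_self]
    have e : ∀ i ∈ range k,
        (-1 : ℝ) ^ (k - i) * (k.choose (i + 1)) * ((i : ℝ) + 1) ^ n
          = -((-1 : ℝ) ^ (k - (i + 1)) * (k.choose (i + 1)) * ((i : ℝ) + 1) ^ n) := by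
      intro i hi
      simp only [mem_range] at hi
      have : k - i = (k - (i + 1)) + 1 := by omega
      rw [this, pow_succ]
      ring
    rw [Finset.sum_congr rfl e, Finset.sum_neg_distrib, hT]
    push_cast
    ring
  have hS : T n (k + 1)
      = (∑ i ∈ range (k + 1),
          (-1 : ℝ) ^ (k - i) * ((k + 1).choose (i + 1)) * ((i : ℝ) + 1) ^ n)
        + (-1 : ℝ) ^ (k + 1) * (0 : ℝ) ^ n := by
    rw [T, Finset.sum_range_succ']
    have e : ∀ i ∈ range (k + 1),
        (-1 : ℝ) ^ (k + 1 - (i + 1)) * ((k + 1).choose (i + 1)) * ((i : ℕ) + 1 : ℝ) ^ n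
          = (-1 : ℝ) ^ (k - i) * ((k + 1).choose (i + 1)) * ((i : ℝ) + 1) ^ n := by
      intro i hi
      have : k + 1 - (i + 1) = k - i := by omega
      rw [this]
    push_cast
    push_cast at e
    rw [Finset.sum_congr rfl e]
    simp
  have e1 : ∀ i ∈ range (k + 1),
      (-1 : ℝ) ^ (k - i) * ((k + 1).choose (i + 1)) * ((i : ℝ) + 1) ^ n
        = (-1 : ℝ) ^ (k - i) * (k.choose (i + 1)) * ((i : ℝ) + 1) ^ n
          + (-1 : ℝ) ^ (k - i) * (k.choose i) * ((i : ℝ) + 1) ^ n := by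
    intro i hi
    rw [Nat.choose_succ_succ]
    push_cast
    ring
  rw [hS, Finset.sum_congr rfl e1, Finset.sum_add_distrib, hA]
  rw [pow_succ]
  ring

lemma keyA : ∀ (n k : ℕ), ((k.factorial * S n k : ℕ) : ℝ) = T n k := by
  intro n
  induction n with
  | zero =>
    intro k
    rw [T_zero]
    match k with
    | 0 => simp [S]
    | k + 1 => simp [S]
  | succ n ih =>
    intro k
    match k with
    | 0 =>
      simp [S, T]
    | k + 1 =>
      have hrec : T (n + 1) (k + 1) = (k + 1) * (T n (k + 1) + T n k) := by
        rw [T_rec_aux]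
        rw [T, Finset.sum_range_succ']
        have e : ∀ i ∈ range (k + 1),
            (-1 : ℝ) ^ (k + 1 - (i + 1)) * ((k + 1).choose (i + 1)) * ((i : ℕ) + 1 : ℝ) ^ (n + 1)
              = (k + 1 : ℝ) * ((-1 : ℝ) ^ (k - i) * (k.choose i) * ((i : ℝ) + 1) ^ n) := by
          intro i hi
          simp only [mem_range] at hi
          have h1 : k + 1 - (i + 1) = k - i := by omega
          have h2 : ((k + 1).choose (i + 1) * (i + 1) : ℕ) = (k + 1) * k.choose i := by
            rw [← Nat.add_one_mul_choose_eq]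
          have h2' : (((k + 1).choose (i + 1) : ℝ)) * ((i : ℝ) + 1) = (k + 1 : ℝ) * (k.choose i : ℝ) := by
            exact_mod_cast congrArg (Nat.cast : ℕ → ℝ) h2
          rw [h1, pow_succ]
          calc (-1 : ℝ) ^ (k - i) * ((k + 1).choose (i + 1)) * (((i : ℝ) + 1) ^ n * ((i : ℝ) + 1))
              = (-1 : ℝ) ^ (k - i) * (((k + 1).choose (i + 1) : ℝ) * ((i : ℝ) + 1)) * ((i : ℝ) + 1) ^ n := by ring
            _ = _ := by rw [h2']; ring
        push_cast at e ⊢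
        rw [Finset.sum_congr rfl e, ← Finset.mul_sum]
        simp
      rw [hrec, ← ih (k + 1), ← ih k]
      show (((k + 1).factorial * S (n + 1) (k + 1) : ℕ) : ℝ) = _
      rw [show S (n + 1) (k + 1) = (k + 1) * S n (k + 1) + S n k from rfl]
      rw [Nat.factorial_succ]
      push_cast
      ring


lemma hasSum_exp_real (y : ℝ) : HasSum (fun n => y ^ n / n.factorial) (Real.exp y) := by
  rw [Real.exp_eq_exp_ℝ]
  exact NormedSpace.expSeries_div_hasSum_exp y

lemma keyB (x : ℝ) (k : ℕ) :
    HasSum (fun n => ((k.factorial * S n k : ℕ) : ℝ) * x ^ n / n.factorial)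
      ((Real.exp x - 1) ^ k) := by
  have hsum : HasSum
      (fun n => ∑ j ∈ range (k + 1),
        (-1 : ℝ) ^ (k - j) * (k.choose j) * (((j : ℝ) * x) ^ n / n.factorial))
      (∑ j ∈ range (k + 1), (-1 : ℝ) ^ (k - j) * (k.choose j) * Real.exp ((j : ℝ) * x)) :=
    hasSum_sum fun j _ => (hasSum_exp_real ((j : ℝ) * x)).mul_left _
  have hfun : (fun n => ((k.factorial * S n k : ℕ) : ℝ) * x ^ n / n.factorial)
      = fun n => ∑ j ∈ range (k + 1),
        (-1 : ℝ) ^ (k - j) * (k.choose j) * (((j : ℝ) * x) ^ n / n.factorial) := by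
    funext n
    rw [keyA, T, Finset.sum_mul, Finset.sum_div]
    apply Finset.sum_congr rfl
    intro j _
    rw [mul_pow]
    ring
  have htgt : (∑ j ∈ range (k + 1), (-1 : ℝ) ^ (k - j) * (k.choose j) * Real.exp ((j : ℝ) * x))
      = (Real.exp x - 1) ^ k := by
    have h := add_pow (Real.exp x) (-1 : ℝ) k
    rw [show Real.exp x + -1 = Real.exp x - 1 by ring] at h
    rw [h]
    apply Finset.sum_congr rfl
    intro j _
    rw [Real.exp_nat_mul]
    ring
  rw [hfun, ← htgt]
  exact hsum

lemma keyC (x : ℝ) (k : ℕ) :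
    HasSum (fun n => ((k.factorial * S n (k + 1) : ℕ) : ℝ) * x ^ n / n.factorial)
      ((Real.exp x - 1) ^ (k + 1) / (k + 1)) := by
  have h := (keyB x (k + 1)).div_const (k + 1)
  have hfun : (fun n => ((k.factorial * S n (k + 1) : ℕ) : ℝ) * x ^ n / n.factorial)
      = fun n => (((k + 1).factorial * S n (k + 1) : ℕ) : ℝ) * x ^ n / n.factorial / (k + 1) := by
    funext n
    rw [Nat.factorial_succ]
    have hk : ((k : ℝ) + 1) ≠ 0 := by positivity
    push_cast
    field_simp
  rw [hfun]
  exact h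

lemma H_eq (n : ℕ) : H n = ∑ k ∈ range n, k.factorial * S n (k + 1) := by
  rw [H, ← Finset.Ico_add_one_right_eq_Icc, Finset.sum_Ico_eq_sum_range]
  simp [Nat.add_comm 1]

lemma hfib (x : ℝ) (n : ℕ) :
    HasSum (fun k => ((k.factorial * S n (k + 1) : ℕ) : ℝ) * x ^ n / n.factorial)
      ((H n : ℝ) * x ^ n / n.factorial) := by
  have hz : ∀ k ∉ range n, ((k.factorial * S n (k + 1) : ℕ) : ℝ) * x ^ n / n.factorial = 0 := by
    intro k hk
    simp only [mem_range, not_lt] at hk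
    rw [S_eq_zero (by omega : n < k + 1)]
    simp
  have := hasSum_sum_of_ne_finset_zero (L := SummationFilter.unconditional _) hz
  convert this using 1
  rw [H_eq]
  push_cast
  rw [Finset.sum_mul, Finset.sum_div]

lemma habs1 (x : ℝ) (hx : |x| < Real.log 2) : |Real.exp x - 1| < 1 := by
  rw [abs_lt] at hx ⊢
  constructor
  · nlinarith [Real.exp_pos x]
  · have h2 : Real.exp x < 2 := by
      rw [show (2 : ℝ) = Real.exp (Real.log 2) from (Real.exp_log (by norm_num)).symm]
      exact Real.exp_lt_exp.mpr hx.2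
    linarith

lemma hlog (x : ℝ) (hx : |x| < Real.log 2) :
    HasSum (fun k : ℕ => (Real.exp x - 1) ^ (k + 1) / ((k : ℝ) + 1))
      (-Real.log (2 - Real.exp x)) := by
  have h := Real.hasSum_pow_div_log_of_abs_lt_one (habs1 x hx)
  rw [show (1 : ℝ) - (Real.exp x - 1) = 2 - Real.exp x by ring] at h
  exact h

theorem stmt15 (x : ℝ) (hx : |x| < Real.log 2) :
    ∑' n : ℕ, (H n : ℝ) * x ^ n / n.factorial = -Real.log (2 - Real.exp x) := by
  set F : ℕ × ℕ → ℝ :=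
    fun p => ((p.2.factorial * S p.1 (p.2 + 1) : ℕ) : ℝ) * x ^ p.1 / p.1.factorial with hF
  set G : ℕ × ℕ → ℝ :=
    fun q => ((q.1.factorial * S q.2 (q.1 + 1) : ℕ) : ℝ) * |x| ^ q.2 / q.2.factorial with hG
  have hnorm : ∀ p : ℕ × ℕ, ‖F p‖ = G p.swap := by
    intro p
    simp only [hF, hG, Prod.snd_swap, Prod.fst_swap, Real.norm_eq_abs, abs_div, abs_mul,
      abs_pow, Nat.abs_cast]
  have hy : |(|x|)| < Real.log 2 := by rwa [abs_abs]
  have hGsum : Summable G := by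
    rw [summable_prod_of_nonneg (by intro q; simp only [hG]; positivity)]
    refine ⟨fun k => (keyC |x| k).summable, ?_⟩
    have he : (fun k => ∑' n, G (k, n))
        = fun k : ℕ => (Real.exp |x| - 1) ^ (k + 1) / ((k : ℝ) + 1) :=
      funext fun k => by simp only [hG]; exact (keyC |x| k).tsum_eq
    rw [he]
    exact (hlog |x| hy).summable
  have hFsum : Summable F := by
    apply Summable.of_norm
    rw [show (fun p : ℕ × ℕ => ‖F p‖) = fun p : ℕ × ℕ => G p.swap from funext hnorm]
    exact hGsum.prod_symm
  have h1 : HasSum (fun k : ℕ => (Real.exp x - 1) ^ (k + 1) / ((k : ℝ) + 1)) (∑' p, F p) := by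
    have hs := hFsum.prod_symm.hasSum
    have h2 := hs.prod_fiberwise (fun k => keyC x k)
    have h3 : ∑' q : ℕ × ℕ, F q.swap = ∑' p, F p := (Equiv.prodComm ℕ ℕ).tsum_eq F
    rwa [h3] at h2
  have htsum : ∑' p, F p = -Real.log (2 - Real.exp x) := h1.unique (hlog x hx)
  rw [← htsum, Summable.tsum_prod' hFsum fun n => (hfib x n).summable]
  exact tsum_congr fun n => ((hfib x n).tsum_eq).symm
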